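/- Over the complex scalars, let X be a Banach space of scalar sequences containing the canonical unit vectors e_n, and let Y be a strictly convex Banach space. If P ∈ P(^N X; Y) attains its norm at a point a ∈ B_X for which there exist n_0 ∈ ℕ and δ > 0 such that ‖a + λ e_n‖ ≤ 1 for all scalars λ with |λ| ≤ δ and all n ≥ n_0, then P(e_n) = 0 for all n ≥ n_0. -/

import Mathlib

noncomputable section

open NormedSpace Filter Topology Metric

/-- The dual (transpose) of a continuous linear operator between normed spaces. -/
def dualOp (𝕜 : Type*) [RCLike 𝕜] {E F : Type*} [NormedAddCommGroup E] [NormedSpace 𝕜 E]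
    [NormedAddCommGroup F] [NormedSpace 𝕜 F] (T : E →L[𝕜] F) :
    StrongDual 𝕜 F →L[𝕜] StrongDual 𝕜 E :=
  (ContinuousLinearMap.compL 𝕜 E F 𝕜).flip T

set_option maxSynthPendingDepth 3 in
/-- The canonical (Arens) extension of a continuous multilinear map `Φ : X × ⋯ × X → W`
to the bidual, evaluated at a point `xs` of the `N`-fold product of the bidual of `X`,
with values in the bidual of `W`.  It is obtained by extending one variable at a time,
the first variable being extended last (which corresponds to the iterated weak-star
limit `lim_{α₁} … lim_{α_N}`).  It is bundled as a continuous linear map in `Φ`. -/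
def arens (𝕜 : Type*) [RCLike 𝕜] (X W : Type*) [NormedAddCommGroup X] [NormedSpace 𝕜 X]
    [NormedAddCommGroup W] [NormedSpace 𝕜 W] :
    ∀ {N : ℕ}, (Fin N → StrongDual 𝕜 (StrongDual 𝕜 X)) →
      (ContinuousMultilinearMap 𝕜 (fun _ : Fin N => X) W →L[𝕜]
        StrongDual 𝕜 (StrongDual 𝕜 W))
  | 0, _ =>
      (NormedSpace.inclusionInDoubleDual 𝕜 W).comp
        ((continuousMultilinearCurryFin0 𝕜 X W).toContinuousLinearEquiv :
          ContinuousMultilinearMap 𝕜 (fun _ : Fin 0 => X) W ≃L[𝕜] W).toContinuousLinearMap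
  | (N + 1), xs =>
      ((ContinuousLinearMap.compL 𝕜 (StrongDual 𝕜 W) (StrongDual 𝕜 X) 𝕜 (xs 0)).comp
        (((ContinuousLinearMap.flipₗᵢ 𝕜 X (StrongDual 𝕜 W) 𝕜).toContinuousLinearEquiv :
            (X →L[𝕜] StrongDual 𝕜 (StrongDual 𝕜 W)) ≃L[𝕜]
              (StrongDual 𝕜 W →L[𝕜] StrongDual 𝕜 X)).toContinuousLinearMap.comp
          ((ContinuousLinearMap.compL 𝕜 X
              (ContinuousMultilinearMap 𝕜 (fun _ : Fin N => X) W)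
              (StrongDual 𝕜 (StrongDual 𝕜 W)) (arens 𝕜 X W (Fin.tail xs))).comp
            ((continuousMultilinearCurryLeftEquiv 𝕜 (fun _ : Fin (N + 1) => X)
                W).toContinuousLinearEquiv :
              ContinuousMultilinearMap 𝕜 (fun _ : Fin (N + 1) => X) W ≃L[𝕜]
                (X →L[𝕜] ContinuousMultilinearMap 𝕜 (fun _ : Fin N => X) W)).toContinuousLinearMap)))

end

section Core2

open NormedSpace Filter Topology Metric

variable (𝕜 : Type*) [RCLike 𝕜] {X W : Type*} [NormedAddCommGroup X] [NormedSpace 𝕜 X]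
  [NormedAddCommGroup W] [NormedSpace 𝕜 W] {N : ℕ}

/-- The norm of the `N`-homogeneous polynomial associated to a continuous multilinear map,
i.e. the supremum of `‖Φ (x, …, x)‖` over the closed unit ball. -/
noncomputable def polyNorm (Φ : ContinuousMultilinearMap 𝕜 (fun _ : Fin N => X) W) : ℝ :=
  ⨆ x : Metric.closedBall (0 : X) 1, ‖Φ (fun _ => (x : X))‖

/-- A multilinear map is symmetric if it is invariant under permutation of its arguments. -/
def IsSymmetricMap (Φ : ContinuousMultilinearMap 𝕜 (fun _ : Fin N => X) W) : Prop :=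
  ∀ (σ : Equiv.Perm (Fin N)) (m : Fin N → X), Φ (fun i => m (σ i)) = Φ m

/-- The polynomial associated to `Φ` attains its norm on the closed unit ball. -/
def PolyNormAttaining (Φ : ContinuousMultilinearMap 𝕜 (fun _ : Fin N => X) W) : Prop :=
  ∃ a : X, ‖a‖ ≤ 1 ∧ ‖Φ (fun _ => a)‖ = polyNorm 𝕜 Φ

/-- The Aron–Berner extension of the polynomial associated to `Φ` attains its norm on the
closed unit ball of the bidual.  (Recall that the Aron–Berner extension has the same norm
as the polynomial itself.) -/
def ABNormAttaining (Φ : ContinuousMultilinearMap 𝕜 (fun _ : Fin N => X) W) : Prop :=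
  ∃ a'' : StrongDual 𝕜 (StrongDual 𝕜 X), ‖a''‖ ≤ 1 ∧
    ‖arens 𝕜 X W (fun _ => a'') Φ‖ = polyNorm 𝕜 Φ

/-- A normed space `E` has the approximation property if the identity map can be approximated,
uniformly on compact sets, by continuous finite-rank operators. -/
def HasApproximationProperty (E : Type*) [NormedAddCommGroup E] [NormedSpace 𝕜 E] : Prop :=
  ∀ K : Set E, IsCompact K → ∀ ε : ℝ, 0 < ε →
    ∃ T : E →L[𝕜] E, FiniteDimensional 𝕜 (LinearMap.range (T : E →ₗ[𝕜] E)) ∧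
      ∀ x ∈ K, ‖T x - x‖ ≤ ε

end Core2

/-- Lemma 3.2: over the complex scalars, if `X` is a Banach sequence space, `Y` is strictly
convex, and the `N`-homogeneous polynomial `P : X → Y` attains its norm at a point `a` of the
unit ball satisfying the extremal condition (3.1) (`‖a + λ eₙ‖ ≤ 1` for all `|λ| ≤ δ`,
`n ≥ n₀`), then `P(eₙ) = 0` for all `n ≥ n₀`. -/
theorem complex_poly_vanishes_on_unit_vectors
    (X : Type*) [NormedAddCommGroup X] [NormedSpace ℂ X] [CompleteSpace X]
    (toSeq : X →ₗ[ℂ] (ℕ → ℂ)) (htoSeq : Function.Injective toSeq)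
    (en : ℕ → X) (hen : ∀ n, toSeq (en n) = Pi.single n (1 : ℂ))
    (Y : Type*) [NormedAddCommGroup Y] [NormedSpace ℂ Y] [CompleteSpace Y]
    [StrictConvexSpace ℝ Y]
    (N : ℕ) (hN : 0 < N)
    (Φ : ContinuousMultilinearMap ℂ (fun _ : Fin N => X) Y) (hΦ : IsSymmetricMap ℂ Φ)
    (a : X) (ha : ‖a‖ ≤ 1) (hattain : ‖Φ (fun _ => a)‖ = polyNorm ℂ Φ)
    (n₀ : ℕ) (δ : ℝ) (hδ : 0 < δ)
    (hext : ∀ lam : ℂ, ‖lam‖ ≤ δ → ∀ n, n₀ ≤ n → ‖a + lam • en n‖ ≤ 1) :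
    ∀ n, n₀ ≤ n → Φ (fun _ => en n) = 0 := by
  intro n hn
  classical
  set e : X := en n with he
  set f : ℂ → Y := fun lam => Φ (fun _ => a + lam • e) with hf
  -- basic bound: polynomial values on the unit ball are ≤ polyNorm
  have hbdd : BddAbove (Set.range fun x : Metric.closedBall (0 : X) 1 =>
      ‖Φ (fun _ => (x : X))‖) := by
    refine ⟨‖Φ‖, ?_⟩
    rintro r ⟨⟨x, hx⟩, rfl⟩
    simp only [Metric.mem_closedBall, dist_zero_right] at hx
    calc ‖Φ (fun _ => x)‖ ≤ ‖Φ‖ * ∏ _i : Fin N, ‖x‖ := Φ.le_opNorm _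
      _ ≤ ‖Φ‖ * 1 := by
          gcongr
          calc (∏ _i : Fin N, ‖x‖) ≤ ∏ _i : Fin N, (1:ℝ) := by
                refine Finset.prod_le_prod (fun _ _ => norm_nonneg _) (fun _ _ => hx)
            _ = 1 := by simp
      _ = ‖Φ‖ := mul_one _
  have key : ∀ x : X, ‖x‖ ≤ 1 → ‖Φ (fun _ => x)‖ ≤ polyNorm ℂ Φ := by
    intro x hx
    have hx' : x ∈ Metric.closedBall (0 : X) 1 := by
      simpa [Metric.mem_closedBall, dist_zero_right] using hx
    exact le_ciSup hbdd (⟨x, hx'⟩ : Metric.closedBall (0 : X) 1)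
  have hf0 : f 0 = Φ (fun _ => a) := by simp [hf]
  -- differentiability
  have hdiff : Differentiable ℂ f := by
    have h1 : Differentiable ℂ (fun lam : ℂ => (fun _ : Fin N => a + lam • e)) := by
      rw [differentiable_pi]
      intro i
      exact (differentiable_id.smul_const e).const_add a
    exact ((Φ.contDiff (n := 1)).differentiable one_ne_zero).comp h1
  -- maximum of the norm at the interior point 0
  have hmax : IsMaxOn (norm ∘ f) (Metric.ball (0 : ℂ) δ) 0 := by
    intro lam hlam
    simp only [Metric.mem_ball, dist_zero_right] at hlam
    have h1 : ‖a + lam • e‖ ≤ 1 := hext lam hlam.le n hn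
    have : ‖f lam‖ ≤ polyNorm ℂ Φ := key _ h1
    simpa [hf0, hattain] using this
  have heq : Set.EqOn f (Function.const ℂ (f 0)) (Metric.ball (0 : ℂ) δ) :=
    Complex.eqOn_of_isPreconnected_of_isMaxOn_norm (convex_ball (0:ℂ) δ).isPreconnected
      Metric.isOpen_ball hdiff.differentiableOn (Metric.mem_ball_self hδ) hmax
  -- expansion of f as a polynomial in lam
  have hexp : ∀ lam : ℂ, f lam =
      ∑ s : Finset (Fin N), lam ^ s.card • Φ (s.piecewise (fun _ => e) (fun _ => a)) := by
    intro lam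
    have h1 : (fun _ : Fin N => a + lam • e) =
        (fun _ : Fin N => a) + (fun _ : Fin N => lam • e) := rfl
    rw [hf]
    simp only [h1]
    rw [Φ.map_add_univ (fun _ : Fin N => a) (fun _ : Fin N => lam • e)]
    refine Fintype.sum_equiv (Function.Involutive.toPerm (compl : Finset (Fin N) → Finset (Fin N))
      compl_involutive) _ _ fun s => ?_
    simp only [Function.Involutive.coe_toPerm]
    have h2 : s.piecewise (fun _ : Fin N => a) (fun _ : Fin N => lam • e) =
        sᶜ.piecewise (fun i => lam • (sᶜ.piecewise (fun _ : Fin N => e) (fun _ : Fin N => a)) i)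
          (sᶜ.piecewise (fun _ : Fin N => e) (fun _ : Fin N => a)) := by
      funext i
      by_cases hi : i ∈ s <;>
        simp [Finset.piecewise, hi]
    rw [h2, Φ.map_piecewise_smul]
    simp [Finset.card_compl]
    rfl

  -- reduce to vanishing of all dual functionals
  refine NormedSpace.eq_zero_of_forall_dual_eq_zero ℂ fun φ => ?_
  -- the scalar polynomial
  set p : Polynomial ℂ :=
    (∑ s : Finset (Fin N),
      Polynomial.C (φ (Φ (s.piecewise (fun _ => e) (fun _ => a)))) * Polynomial.X ^ s.card)
      - Polynomial.C (φ (f 0)) with hp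
  have hev : ∀ lam : ℂ, lam ∈ Metric.ball (0:ℂ) δ → p.eval lam = 0 := by
    intro lam hlam
    have h1 : φ (f lam) = φ (f 0) := by rw [heq hlam]; rfl
    have h2 : p.eval lam = φ (f lam) - φ (f 0) := by
      rw [hp]
      simp only [Polynomial.eval_sub, Polynomial.eval_finset_sum, Polynomial.eval_mul,
        Polynomial.eval_C, Polynomial.eval_pow, Polynomial.eval_X]
      congr 1
      rw [hexp lam, map_sum]
      refine Finset.sum_congr rfl fun s _ => ?_
      rw [map_smul]
      simp [smul_eq_mul, mul_comm]
    rw [h2, h1, sub_self]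
  have hp0 : p = 0 := by
    refine Polynomial.eq_zero_of_infinite_isRoot p ?_
    have hinf : (Metric.ball (0:ℂ) δ).Infinite :=
      infinite_of_mem_nhds (0:ℂ) (Metric.ball_mem_nhds 0 hδ)
    exact hinf.mono fun lam hlam => hev lam hlam
  have hcoeff : p.coeff N = φ (Φ (fun _ => e)) := by
    rw [hp]
    rw [Polynomial.coeff_sub, Polynomial.finset_sum_coeff]
    have hCN : (Polynomial.C (φ (f 0))).coeff N = 0 := by
      rw [Polynomial.coeff_C, if_neg (hN).ne']
    rw [hCN, sub_zero]
    rw [Finset.sum_eq_single (Finset.univ : Finset (Fin N))]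
    · simp [Polynomial.coeff_C_mul, Polynomial.coeff_X_pow, Finset.piecewise_univ]
    · intro s _ hs
      have hcard : s.card ≠ N := by
        intro hc
        exact hs ((Finset.card_eq_iff_eq_univ s).mp (by simpa using hc))
      simp [Polynomial.coeff_C_mul, Polynomial.coeff_X_pow, hcard, Ne.symm hcard]
    · intro h
      exact absurd (Finset.mem_univ _) h
  rw [← hcoeff, hp0, Polynomial.coeff_zero]
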